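/- With the recursive random weights β_{j,n} as above, if S(γ) = E[L^γ + R^γ] − 1 < 0 for some γ > 0, then the maximum weight β_{(n)} := max_{1≤j≤n} β_{j,n} converges to 0 in probability as n → ∞. -/

import Mathlib

open MeasureTheory ProbabilityTheory

/-- The recursive random weights `β_{j,n}` of McKean trees: `kacWeight L R I n j ω`
is the weight `β_{j,n}(ω)` (for `1 ≤ j ≤ n`), built by splitting the `I_n`-th weight
into `(L_n β_{I_n,n}, R_n β_{I_n,n})`. -/
noncomputable def kacWeight {Ω : Type*} (L R : ℕ → Ω → ℝ) (I : ℕ → Ω → ℕ) :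
    ℕ → ℕ → Ω → ℝ
  | 0, _, _ => 0
  | 1, j, _ => if j = 1 then 1 else 0
  | (n + 2), j, ω =>
      if j < I (n + 1) ω then kacWeight L R I (n + 1) j ω
      else if j = I (n + 1) ω then L (n + 1) ω * kacWeight L R I (n + 1) j ω
      else if j = I (n + 1) ω + 1 then R (n + 1) ω * kacWeight L R I (n + 1) (j - 1) ω
      else kacWeight L R I (n + 1) (j - 1) ω

/-- `M_n^{(s)} = Σ_{j=1}^n β_{j,n}^s`. -/
noncomputable def kacM {Ω : Type*} (L R : ℕ → Ω → ℝ) (I : ℕ → Ω → ℕ)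
    (s : ℝ) (n : ℕ) (ω : Ω) : ℝ :=
  ∑ j ∈ Finset.Icc 1 n, kacWeight L R I n j ω ^ s

/-- Joint family encoding the coefficient pairs `(L_n, R_n)` and the indices `I_n`
as one indexed family of random vectors, used to state their mutual independence. -/
noncomputable def kacFamily {Ω : Type*} (L R : ℕ → Ω → ℝ) (I : ℕ → Ω → ℕ) :
    ℕ ⊕ ℕ → Ω → ℝ × ℝ :=
  Sum.elim (fun n ω => (L n ω, R n ω)) (fun n ω => ((I n ω : ℝ), 0))

noncomputable def kacAux (f : ℕ → ℝ × ℝ) (g : ℕ → ℕ) : ℕ → ℕ → ℝ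
  | 0, _ => 0
  | 1, j => if j = 1 then 1 else 0
  | (n + 2), j =>
      if j < g (n + 1) then kacAux f g (n + 1) j
      else if j = g (n + 1) then (f (n + 1)).1 * kacAux f g (n + 1) j
      else if j = g (n + 1) + 1 then (f (n + 1)).2 * kacAux f g (n + 1) (j - 1)
      else kacAux f g (n + 1) (j - 1)

lemma kacWeight_eq_aux {Ω : Type*} (L R : ℕ → Ω → ℝ) (I : ℕ → Ω → ℕ) (n j : ℕ) (ω : Ω) :
    kacWeight L R I n j ω = kacAux (fun m => (L m ω, R m ω)) (fun m => I m ω) n j := by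
  induction n generalizing j with
  | zero => simp [kacWeight, kacAux]
  | succ n ih =>
    cases n with
    | zero => simp [kacWeight, kacAux]
    | succ m =>
      rw [kacWeight, kacAux]
      simp only [ih]

lemma kacAux_nonneg (f : ℕ → ℝ × ℝ) (g : ℕ → ℕ)
    (hf : ∀ m, 0 ≤ (f m).1 ∧ 0 ≤ (f m).2) (n j : ℕ) : 0 ≤ kacAux f g n j := by
  induction n generalizing j with
  | zero => simp [kacAux]
  | succ n ih =>
    cases n with
    | zero => rw [kacAux]; split <;> norm_num
    | succ m =>
      rw [kacAux]
      split
      · exact ih j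
      split
      · exact mul_nonneg (hf _).1 (ih j)
      split
      · exact mul_nonneg (hf _).2 (ih _)
      · exact ih _

lemma kacAux_eq_zero (f : ℕ → ℝ × ℝ) (g : ℕ → ℕ) (n j : ℕ)
    (h : j = 0 ∨ n < j) : kacAux f g n j = 0 := by
  induction n generalizing j with
  | zero => simp [kacAux]
  | succ n ih =>
    cases n with
    | zero =>
      rw [kacAux]
      have : j ≠ 1 := by omega
      simp [this]
    | succ m =>
      rw [kacAux]
      rcases h with h | h
      · subst h
        split
        · exact ih 0 (Or.inl rfl)
        split
        · rw [ih 0 (Or.inl rfl)]; ring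
        split
        · omega
        · exact ih 0 (Or.inl rfl)
      · split
        · exact ih j (Or.inr (by omega))
        split
        · rw [ih j (Or.inr (by omega))]; ring
        split
        · rw [ih (j-1) (Or.inr (by omega))]; ring
        · exact ih (j-1) (Or.inr (by omega))

lemma kacAux_congr (f f' : ℕ → ℝ × ℝ) (g g' : ℕ → ℕ) (n : ℕ)
    (h : ∀ m, m + 1 < n → f (m + 1) = f' (m + 1) ∧ g (m + 1) = g' (m + 1)) :
    ∀ j, kacAux f g n j = kacAux f' g' n j := by
  induction n with
  | zero => simp [kacAux]
  | succ n ih =>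
    cases n with
    | zero => intro j; rw [kacAux, kacAux]
    | succ m =>
      intro j
      have hind : f (m + 1) = f' (m + 1) ∧ g (m + 1) = g' (m + 1) := h m (by omega)
      have ih' := ih (fun k hk => h k (by omega))
      rw [kacAux, kacAux, hind.1, hind.2, ih' j, ih' (j - 1)]

lemma kacAux_measurable (n j : ℕ) :
    Measurable (fun q : (ℕ → ℝ × ℝ) × (ℕ → ℕ) => kacAux q.1 q.2 n j) := by
  induction n generalizing j with
  | zero => simp only [kacAux]; exact measurable_const
  | succ n ih =>
    cases n with
    | zero =>
      simp only [kacAux]; exact measurable_const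
    | succ m =>
      have hg : Measurable (fun q : (ℕ → ℝ × ℝ) × (ℕ → ℕ) => q.2 (m + 1)) :=
        (measurable_pi_apply _).comp measurable_snd
      have hf1 : Measurable (fun q : (ℕ → ℝ × ℝ) × (ℕ → ℕ) => (q.1 (m + 1)).1) :=
        measurable_fst.comp ((measurable_pi_apply _).comp measurable_fst)
      have hf2 : Measurable (fun q : (ℕ → ℝ × ℝ) × (ℕ → ℕ) => (q.1 (m + 1)).2) :=
        measurable_snd.comp ((measurable_pi_apply _).comp measurable_fst)
      have h1 : MeasurableSet {x : (ℕ → ℝ × ℝ) × (ℕ → ℕ) | j < x.2 (m + 1)} :=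
        hg (show MeasurableSet {v : ℕ | j < v} from trivial)
      have h2 : MeasurableSet {x : (ℕ → ℝ × ℝ) × (ℕ → ℕ) | j = x.2 (m + 1)} :=
        hg (show MeasurableSet {v : ℕ | j = v} from trivial)
      have h3 : MeasurableSet {x : (ℕ → ℝ × ℝ) × (ℕ → ℕ) | j = x.2 (m + 1) + 1} :=
        hg (show MeasurableSet {v : ℕ | j = v + 1} from trivial)
      simp only [kacAux]
      exact Measurable.ite h1 (ih j) (Measurable.ite h2 (hf1.mul (ih j))
        (Measurable.ite h3 (hf2.mul (ih (j - 1))) (ih (j - 1))))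

section Weight
variable {Ω : Type*} (L R : ℕ → Ω → ℝ) (I : ℕ → Ω → ℕ)

lemma kacWeight_nonneg (hL : ∀ n ω, 0 ≤ L n ω) (hR : ∀ n ω, 0 ≤ R n ω)
    (n j : ℕ) (ω : Ω) : 0 ≤ kacWeight L R I n j ω := by
  rw [kacWeight_eq_aux]
  exact kacAux_nonneg _ _ (fun m => ⟨hL m ω, hR m ω⟩) n j

lemma kacWeight_eq_zero (n j : ℕ) (h : j = 0 ∨ n < j) (ω : Ω) :
    kacWeight L R I n j ω = 0 := by
  rw [kacWeight_eq_aux]; exact kacAux_eq_zero _ _ n j h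

lemma kacWeight_measurable [MeasurableSpace Ω]
    (hLm : ∀ n, Measurable (L n)) (hRm : ∀ n, Measurable (R n))
    (hIm : ∀ n, Measurable (I n)) (n j : ℕ) :
    Measurable (fun ω => kacWeight L R I n j ω) := by
  have : (fun ω => kacWeight L R I n j ω)
      = (fun q : (ℕ → ℝ × ℝ) × (ℕ → ℕ) => kacAux q.1 q.2 n j) ∘
        (fun ω => (fun m => (L m ω, R m ω), fun m => I m ω)) := by
    funext ω; simp [kacWeight_eq_aux]
  rw [this]
  exact (kacAux_measurable n j).comp
    ((measurable_pi_lambda _ (fun m => (hLm m).prodMk (hRm m))).prodMk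
      (measurable_pi_lambda _ (fun m => hIm m)))

/-- Pointwise recurrence for `kacM` when the chosen index lies in range. -/
lemma kacM_rec {γ : ℝ} (hL : ∀ n ω, 0 ≤ L n ω) (hR : ∀ n ω, 0 ≤ R n ω) (p : ℕ) (ω : Ω)
    (hi : I (p + 1) ω ∈ Finset.Icc 1 (p + 1)) :
    kacM L R I γ (p + 2) ω = kacM L R I γ (p + 1) ω
      + (L (p + 1) ω ^ γ + R (p + 1) ω ^ γ - 1) * kacWeight L R I (p + 1) (I (p + 1) ω) ω ^ γ := by
  set i := I (p + 1) ω with hig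
  obtain ⟨hi1, hi2⟩ := Finset.mem_Icc.mp hi
  set a : ℕ → ℝ := fun k => kacWeight L R I (p + 1) k ω ^ γ with ha
  set F : ℕ → ℝ := fun j => kacWeight L R I (p + 2) j ω ^ γ with hF
  have hFi : F i = L (p + 1) ω ^ γ * a i := by
    simp only [hF, ha, kacWeight, ← hig]
    split_ifs <;>
      first
        | exact Real.mul_rpow (hL _ _) (kacWeight_nonneg L R I hL hR _ _ _)
        | exact (by omega : False).elim
  have hFi1 : F (i + 1) = R (p + 1) ω ^ γ * a i := by
    simp only [hF, ha, kacWeight, ← hig]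
    split_ifs <;>
      first
        | (simp only [Nat.add_sub_cancel];
           exact Real.mul_rpow (hR _ _) (kacWeight_nonneg L R I hL hR _ _ _))
        | exact (by omega : False).elim
  have hmem1 : i ∈ Finset.Icc 1 (p + 2) := Finset.mem_Icc.mpr ⟨hi1, by omega⟩
  have hmem2 : i + 1 ∈ (Finset.Icc 1 (p + 2)).erase i :=
    Finset.mem_erase.mpr ⟨by omega, Finset.mem_Icc.mpr ⟨by omega, by omega⟩⟩
  have hmem3 : i ∈ Finset.Icc 1 (p + 1) := Finset.mem_Icc.mpr ⟨hi1, hi2⟩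
  have e1 : kacM L R I γ (p + 2) ω
      = F i + (F (i + 1) + ∑ j ∈ ((Finset.Icc 1 (p + 2)).erase i).erase (i + 1), F j) := by
    rw [kacM]
    rw [← Finset.add_sum_erase _ F hmem1, ← Finset.add_sum_erase _ F hmem2]
  have e2 : kacM L R I γ (p + 1) ω
      = a i + ∑ k ∈ (Finset.Icc 1 (p + 1)).erase i, a k := by
    rw [kacM, ← Finset.add_sum_erase _ a hmem3]
  have e3 : ∑ j ∈ ((Finset.Icc 1 (p + 2)).erase i).erase (i + 1), F j
      = ∑ k ∈ (Finset.Icc 1 (p + 1)).erase i, a k := by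
    apply Finset.sum_nbij' (i := fun j => if j < i then j else j - 1)
      (j := fun k => if k < i then k else k + 1)
    · intro j hj
      simp only [Finset.mem_erase, Finset.mem_Icc] at hj ⊢
      split <;> omega
    · intro k hk
      simp only [Finset.mem_erase, Finset.mem_Icc] at hk ⊢
      split <;> omega
    · intro j hj
      simp only [Finset.mem_erase, Finset.mem_Icc] at hj
      split_ifs <;> omega
    · intro k hk
      simp only [Finset.mem_erase, Finset.mem_Icc] at hk
      split_ifs <;> omega
    · intro j hj
      simp only [Finset.mem_erase, Finset.mem_Icc] at hj
      simp only [hF, ha, kacWeight, ← hig]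
      split_ifs <;> first | rfl | exact (by omega : False).elim
  rw [e1, e2, e3, hFi, hFi1]
  ring

end Weight

section Indep
variable {Ω : Type*} [MeasurableSpace Ω] {μ : MeasureTheory.Measure Ω}
  (L R : ℕ → Ω → ℝ) (I : ℕ → Ω → ℕ)

lemma kacFamily_measurable (hLm : ∀ n, Measurable (L n)) (hRm : ∀ n, Measurable (R n))
    (hIm : ∀ n, Measurable (I n)) : ∀ i, Measurable (kacFamily L R I i) := by
  intro i
  cases i with
  | inl n => exact (hLm n).prodMk (hRm n)
  | inr n =>
    exact (measurable_from_top.comp (hIm n)).prodMk measurable_const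

lemma kac_indep_weight (hLm : ∀ n, Measurable (L n)) (hRm : ∀ n, Measurable (R n))
    (hIm : ∀ n, Measurable (I n))
    (hindep : iIndepFun (kacFamily L R I) μ)
    (γ : ℝ) (n k j : ℕ) :
    IndepFun (fun ω => (if I n ω = k then (1:ℝ) else 0) * (L n ω ^ γ + R n ω ^ γ - 1))
      (fun ω => kacWeight L R I n j ω ^ γ) μ := by
  classical
  set S : Finset (ℕ ⊕ ℕ) :=
    (Finset.range n).image Sum.inl ∪ (Finset.range n).image Sum.inr with hS
  set T : Finset (ℕ ⊕ ℕ) := {Sum.inl n, Sum.inr n} with hT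
  have hdisj : Disjoint T S := by
    rw [Finset.disjoint_left]
    intro i hi his
    simp only [hT, hS, Finset.mem_insert, Finset.mem_singleton, Finset.mem_union,
      Finset.mem_image, Finset.mem_range] at hi his
    rcases hi with rfl | rfl <;>
      rcases his with ⟨m, hm, hmeq⟩ | ⟨m, hm, hmeq⟩ <;> simp_all <;> omega
  have base := hindep.indepFun_finset T S hdisj (kacFamily_measurable L R I hLm hRm hIm)
  have hTl : Sum.inl n ∈ T := by simp [hT]
  have hTr : Sum.inr n ∈ T := by simp [hT]
  set φT : (T → ℝ × ℝ) → ℝ := fun v =>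
    (if ⌊(v ⟨Sum.inr n, hTr⟩).1⌋₊ = k then (1:ℝ) else 0)
      * ((v ⟨Sum.inl n, hTl⟩).1 ^ γ + (v ⟨Sum.inl n, hTl⟩).2 ^ γ - 1) with hφT
  set φS : (S → ℝ × ℝ) → ℝ := fun v =>
    (kacAux (fun m => if h : Sum.inl m ∈ S then v ⟨Sum.inl m, h⟩ else 0)
      (fun m => if h : Sum.inr m ∈ S then ⌊(v ⟨Sum.inr m, h⟩).1⌋₊ else 0) n j) ^ γ with hφS
  have hφTm : Measurable φT := by
    apply Measurable.mul
    · apply Measurable.ite _ measurable_const measurable_const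
      exact (Nat.measurable_floor.comp (measurable_fst.comp (measurable_pi_apply _)))
        (measurableSet_singleton k)
    · exact (((measurable_fst.comp (measurable_pi_apply _)).pow measurable_const).add
        ((measurable_snd.comp (measurable_pi_apply _)).pow measurable_const)).sub
        measurable_const
  have hφSm : Measurable φS := by
    apply Measurable.pow _ measurable_const
    have hmap : Measurable (fun v : (S → ℝ × ℝ) =>
        ((fun m => if h : Sum.inl m ∈ S then v ⟨Sum.inl m, h⟩ else 0,
          fun m => if h : Sum.inr m ∈ S then ⌊(v ⟨Sum.inr m, h⟩).1⌋₊ else 0) :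
          (ℕ → ℝ × ℝ) × (ℕ → ℕ))) := by
      apply Measurable.prodMk
      · apply measurable_pi_lambda
        intro m
        by_cases h : Sum.inl m ∈ S
        · simp only [dif_pos h]; exact measurable_pi_apply _
        · simp only [dif_neg h]; exact measurable_const
      · apply measurable_pi_lambda
        intro m
        by_cases h : Sum.inr m ∈ S
        · simp only [dif_pos h]
          exact Nat.measurable_floor.comp (measurable_fst.comp (measurable_pi_apply _))
        · simp only [dif_neg h]; exact measurable_const
    exact (kacAux_measurable n j).comp hmap
  have hcomp := (base.comp hφTm hφSm)
  have e1 : φT ∘ (fun ω (i : T) => kacFamily L R I i ω)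
      = fun ω => (if I n ω = k then (1:ℝ) else 0) * (L n ω ^ γ + R n ω ^ γ - 1) := by
    funext ω
    simp only [Function.comp_apply, hφT, kacFamily, Sum.elim_inl, Sum.elim_inr,
      Nat.floor_natCast]
  have e2 : φS ∘ (fun ω (i : S) => kacFamily L R I i ω)
      = fun ω => kacWeight L R I n j ω ^ γ := by
    funext ω
    simp only [Function.comp_apply, hφS]
    congr 1
    rw [kacWeight_eq_aux]
    apply kacAux_congr
    intro m hm
    have h1 : Sum.inl (m + 1) ∈ S := by
      simp only [hS, Finset.mem_union, Finset.mem_image, Finset.mem_range]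
      exact Or.inl ⟨m + 1, hm, rfl⟩
    have h2 : Sum.inr (m + 1) ∈ S := by
      simp only [hS, Finset.mem_union, Finset.mem_image, Finset.mem_range]
      exact Or.inr ⟨m + 1, hm, rfl⟩
    constructor
    · simp only [dif_pos h1, kacFamily, Sum.elim_inl]
    · simp only [dif_pos h2, kacFamily, Sum.elim_inr, Nat.floor_natCast]
  rw [e1, e2] at hcomp
  exact hcomp

lemma kac_indep_pair (hLm : ∀ n, Measurable (L n)) (hRm : ∀ n, Measurable (R n))
    (hIm : ∀ n, Measurable (I n))
    (hindep : iIndepFun (kacFamily L R I) μ)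
    (γ : ℝ) (n k : ℕ) :
    IndepFun (fun ω => (if I n ω = k then (1:ℝ) else 0))
      (fun ω => L n ω ^ γ + R n ω ^ γ - 1) μ := by
  have base : IndepFun (kacFamily L R I (Sum.inr n)) (kacFamily L R I (Sum.inl n)) μ :=
    hindep.indepFun (by simp)
  have m1 : Measurable (fun p : ℝ × ℝ => if ⌊p.1⌋₊ = k then (1:ℝ) else 0) :=
    Measurable.ite ((Nat.measurable_floor.comp measurable_fst)
      (measurableSet_singleton k)) measurable_const measurable_const
  have m2 : Measurable (fun p : ℝ × ℝ => p.1 ^ γ + p.2 ^ γ - 1) :=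
    ((measurable_fst.pow measurable_const).add
      (measurable_snd.pow measurable_const)).sub measurable_const
  have hcomp := base.comp m1 m2
  have e1 : (fun p : ℝ × ℝ => if ⌊p.1⌋₊ = k then (1:ℝ) else 0) ∘ kacFamily L R I (Sum.inr n)
      = fun ω => (if I n ω = k then (1:ℝ) else 0) := by
    funext ω; simp [kacFamily, Nat.floor_natCast]
  have e2 : (fun p : ℝ × ℝ => p.1 ^ γ + p.2 ^ γ - 1) ∘ kacFamily L R I (Sum.inl n)
      = fun ω => L n ω ^ γ + R n ω ^ γ - 1 := by
    funext ω; simp [kacFamily]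
  rw [e1, e2] at hcomp
  exact hcomp

end Indep

section Step
variable {Ω : Type*} [MeasurableSpace Ω] (μ : MeasureTheory.Measure Ω) [IsProbabilityMeasure μ]
  (L R : ℕ → Ω → ℝ) (I : ℕ → Ω → ℕ)

lemma kacM_measurable (hLm : ∀ n, Measurable (L n)) (hRm : ∀ n, Measurable (R n))
    (hIm : ∀ n, Measurable (I n)) (γ : ℝ) (n : ℕ) :
    Measurable (kacM L R I γ n) := by
  apply Finset.measurable_sum
  intro j _
  exact (kacWeight_measurable L R I hLm hRm hIm n j).pow measurable_const

lemma kac_step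
    (hLm : ∀ n, Measurable (L n)) (hRm : ∀ n, Measurable (R n))
    (hIm : ∀ n, Measurable (I n))
    (hLpos : ∀ n ω, 0 ≤ L n ω) (hRpos : ∀ n ω, 0 ≤ R n ω)
    (hiid : ∀ n, 1 ≤ n →
      μ.map (fun ω => (L n ω, R n ω)) = μ.map (fun ω => (L 1 ω, R 1 ω)))
    (hunif : ∀ n, 1 ≤ n → ∀ k ∈ Finset.Icc 1 n, μ {ω | I n ω = k} = (n : ENNReal)⁻¹)
    (hindep : iIndepFun (kacFamily L R I) μ)
    (γ : ℝ) (hγ : 0 < γ)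
    (hint : MeasureTheory.Integrable (fun ω => L 1 ω ^ γ + R 1 ω ^ γ) μ)
    (p : ℕ) (hMint : MeasureTheory.Integrable (kacM L R I γ (p + 1)) μ) :
    MeasureTheory.Integrable (kacM L R I γ (p + 2)) μ ∧
    ∫ ω, kacM L R I γ (p + 2) ω ∂μ
      = (1 + ((∫ ω, (L 1 ω ^ γ + R 1 ω ^ γ) ∂μ) - 1) / (p + 1))
        * ∫ ω, kacM L R I γ (p + 1) ω ∂μ := by
  classical
  set n := p + 1 with hn
  have hn1 : 1 ≤ n := by omega
  set m : ℝ := ∫ ω, (L 1 ω ^ γ + R 1 ω ^ γ) ∂μ with hm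
  set Wp : ℕ → Ω → ℝ := fun k ω => kacWeight L R I n k ω ^ γ with hWp
  set G : ℕ → Ω → ℝ := fun k ω =>
    (if I n ω = k then (1:ℝ) else 0) * (L n ω ^ γ + R n ω ^ γ - 1) with hG
  -- basic facts
  have hWpnn : ∀ k ω, 0 ≤ Wp k ω := fun k ω =>
    Real.rpow_nonneg (kacWeight_nonneg L R I hLpos hRpos n k ω) γ
  have hWpm : ∀ k, Measurable (Wp k) := fun k =>
    (kacWeight_measurable L R I hLm hRm hIm n k).pow measurable_const
  have hWple : ∀ k ∈ Finset.Icc 1 n, ∀ ω, Wp k ω ≤ kacM L R I γ n ω := by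
    intro k hk ω
    exact Finset.single_le_sum (f := fun j => kacWeight L R I n j ω ^ γ)
      (fun j _ => Real.rpow_nonneg (kacWeight_nonneg L R I hLpos hRpos n j ω) γ) hk
  have hWpint : ∀ k, MeasureTheory.Integrable (Wp k) μ := by
    intro k
    by_cases hk : k ∈ Finset.Icc 1 n
    · refine hMint.mono' (hWpm k).aestronglyMeasurable ?_
      filter_upwards with ω
      rw [Real.norm_eq_abs, abs_of_nonneg (hWpnn k ω)]
      exact hWple k hk ω
    · have : Wp k = fun _ => 0 := by
        funext ω
        rw [hWp]
        simp only
        rw [kacWeight_eq_zero L R I n k (by simp only [Finset.mem_Icc] at hk; omega) ω,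
          Real.zero_rpow hγ.ne']
      rw [this]
      exact MeasureTheory.integrable_const 0
  -- the X_n variable
  have hfm : Measurable (fun q : ℝ × ℝ => q.1 ^ γ + q.2 ^ γ) :=
    (measurable_fst.pow measurable_const).add (measurable_snd.pow measurable_const)
  have hpm : AEMeasurable (fun ω => (L n ω, R n ω)) μ := ((hLm n).prodMk (hRm n)).aemeasurable
  have hpm1 : AEMeasurable (fun ω => (L 1 ω, R 1 ω)) μ := ((hLm 1).prodMk (hRm 1)).aemeasurable
  have hXint : MeasureTheory.Integrable (fun ω => L n ω ^ γ + R n ω ^ γ) μ := by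
    have h1 : MeasureTheory.Integrable (fun q : ℝ × ℝ => q.1 ^ γ + q.2 ^ γ)
        (μ.map (fun ω => (L 1 ω, R 1 ω))) := by
      rw [MeasureTheory.integrable_map_measure hfm.aestronglyMeasurable hpm1]
      simpa [Function.comp_def] using hint
    rw [← hiid n hn1] at h1
    rw [MeasureTheory.integrable_map_measure hfm.aestronglyMeasurable hpm] at h1
    simpa [Function.comp_def] using h1
  have hXval : ∫ ω, (L n ω ^ γ + R n ω ^ γ) ∂μ = m := by
    have e1 : ∫ ω, (L n ω ^ γ + R n ω ^ γ) ∂μ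
        = ∫ q, (q.1 ^ γ + q.2 ^ γ) ∂(μ.map (fun ω => (L n ω, R n ω))) := by
      rw [MeasureTheory.integral_map hpm hfm.aestronglyMeasurable]
    rw [e1, hiid n hn1, MeasureTheory.integral_map hpm1 hfm.aestronglyMeasurable]
  have hXsubint : MeasureTheory.Integrable (fun ω => L n ω ^ γ + R n ω ^ γ - 1) μ :=
    hXint.sub (MeasureTheory.integrable_const 1)
  have hXsubval : ∫ ω, (L n ω ^ γ + R n ω ^ γ - 1) ∂μ = m - 1 := by
    rw [MeasureTheory.integral_sub hXint (MeasureTheory.integrable_const 1), hXval]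
    simp
  -- G facts
  have hGm : ∀ k, Measurable (G k) := by
    intro k
    apply Measurable.mul
    · exact Measurable.ite ((hIm n) (measurableSet_singleton k)) measurable_const
        measurable_const
    · exact ((hLm n).pow measurable_const).add ((hRm n).pow measurable_const) |>.sub
        measurable_const
  have hGint : ∀ k, MeasureTheory.Integrable (G k) μ := by
    intro k
    refine hXsubint.abs.mono' (hGm k).aestronglyMeasurable ?_
    filter_upwards with ω
    rw [hG]
    simp only [Real.norm_eq_abs, abs_mul]
    split_ifs <;> simp [abs_nonneg]
  have hindval : ∀ k ∈ Finset.Icc 1 n,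
      ∫ ω, (if I n ω = k then (1:ℝ) else 0) ∂μ = (n : ℝ)⁻¹ := by
    intro k hk
    have hseq : (fun ω => if I n ω = k then (1:ℝ) else 0)
        = Set.indicator {ω | I n ω = k} (fun _ => (1:ℝ)) := by
      funext ω
      rw [Set.indicator_apply]
      rfl
    have hsmeas : MeasurableSet {ω | I n ω = k} := (hIm n) (measurableSet_singleton k)
    rw [hseq, MeasureTheory.integral_indicator_const (1:ℝ) hsmeas, measureReal_def, hunif n hn1 k hk]
    simp [ENNReal.toReal_inv]
  have hindint : ∀ k, MeasureTheory.Integrable (fun ω => if I n ω = k then (1:ℝ) else 0) μ := by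
    intro k
    refine (MeasureTheory.integrable_const (1:ℝ)).mono'
      ((Measurable.ite ((hIm n) (measurableSet_singleton k)) measurable_const
        measurable_const).aestronglyMeasurable) ?_
    filter_upwards with ω
    split_ifs <;> simp
  have hGval : ∀ k ∈ Finset.Icc 1 n, ∫ ω, G k ω ∂μ = (n : ℝ)⁻¹ * (m - 1) := by
    intro k hk
    have hip := kac_indep_pair L R I hLm hRm hIm hindep γ n k
    have := hip.integral_mul_eq_mul_integral (hindint k).aestronglyMeasurable hXsubint.aestronglyMeasurable
    have heq : (fun ω => if I n ω = k then (1:ℝ) else 0) * (fun ω => L n ω ^ γ + R n ω ^ γ - 1)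
        = G k := rfl
    rw [heq] at this
    rw [this, hindval k hk, hXsubval]
  -- products
  have hprod_ind : ∀ k, IndepFun (G k) (Wp k) μ :=
    fun k => kac_indep_weight L R I hLm hRm hIm hindep γ n k k
  have hprod_int : ∀ k, MeasureTheory.Integrable (fun ω => G k ω * Wp k ω) μ := by
    intro k
    have := (hprod_ind k).integrable_mul (hGint k) (hWpint k)
    exact this
  have hprod_val : ∀ k ∈ Finset.Icc 1 n,
      ∫ ω, G k ω * Wp k ω ∂μ = ((n:ℝ)⁻¹ * (m - 1)) * ∫ ω, Wp k ω ∂μ := by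
    intro k hk
    have := (hprod_ind k).integral_mul_eq_mul_integral (hGint k).aestronglyMeasurable (hWpint k).aestronglyMeasurable
    have heq : G k * Wp k = fun ω => G k ω * Wp k ω := rfl
    rw [heq] at this
    rw [this, hGval k hk]
  -- the index is in range almost surely
  have hAmeas : MeasurableSet {ω | I n ω ∈ Finset.Icc 1 n} :=
    (hIm n) (show MeasurableSet {v : ℕ | v ∈ Finset.Icc 1 n} from trivial)
  have hA : μ {ω | I n ω ∈ Finset.Icc 1 n} = 1 := by
    have hunion : {ω | I n ω ∈ Finset.Icc 1 n}
        = ⋃ k ∈ Finset.Icc 1 n, {ω | I n ω = k} := by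
      ext ω
      simp
    have hdisj2 : ((Finset.Icc 1 n : Finset ℕ) : Set ℕ).PairwiseDisjoint
        (fun k => {ω | I n ω = k}) := by
      intro a _ b _ hab
      simp only [Function.onFun]
      apply Set.disjoint_left.mpr
      intro ω h1 h2
      simp only [Set.mem_setOf_eq] at h1 h2
      exact hab (h1.symm.trans h2)
    have hmeas2 : ∀ k ∈ Finset.Icc 1 n, MeasurableSet {ω | I n ω = k} :=
      fun k _ => (hIm n) (measurableSet_singleton k)
    rw [hunion, MeasureTheory.measure_biUnion_finset hdisj2 hmeas2]
    rw [Finset.sum_congr rfl (hunif n hn1), Finset.sum_const, Nat.card_Icc]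
    simp only [Nat.add_sub_cancel, nsmul_eq_mul]
    rw [ENNReal.mul_inv_cancel (by simp [hn]) (by simp)]
  have hAc : μ {ω | I n ω ∈ Finset.Icc 1 n}ᶜ = 0 := by
    rw [MeasureTheory.measure_compl hAmeas (MeasureTheory.measure_ne_top μ _), hA]
    simp
  -- the almost-everywhere recurrence
  have haerec : kacM L R I γ (p + 2)
      =ᵐ[μ] fun ω => kacM L R I γ n ω + ∑ k ∈ Finset.Icc 1 n, G k ω * Wp k ω := by
    have : ∀ ω ∈ {ω | I n ω ∈ Finset.Icc 1 n}, kacM L R I γ (p + 2) ω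
        = kacM L R I γ n ω + ∑ k ∈ Finset.Icc 1 n, G k ω * Wp k ω := by
      intro ω hω
      simp only [Set.mem_setOf_eq] at hω
      rw [kacM_rec L R I hLpos hRpos p ω hω]
      congr 1
      rw [Finset.sum_eq_single (I n ω)]
      · simp only [hG, hWp, if_true, if_pos rfl, one_mul, hn]
      · intro k _ hk
        rw [hG]
        simp only [if_neg (fun h : I n ω = k => hk h.symm), zero_mul]
      · intro h
        exact absurd hω h
    filter_upwards [MeasureTheory.measure_eq_zero_iff_ae_notMem.mp hAc] with ω hω
    exact this ω (by simpa using hω)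
  have hsumint : MeasureTheory.Integrable
      (fun ω => ∑ k ∈ Finset.Icc 1 n, G k ω * Wp k ω) μ :=
    MeasureTheory.integrable_finset_sum _ (fun k _ => hprod_int k)
  have hint2 : MeasureTheory.Integrable (kacM L R I γ (p + 2)) μ :=
    (hMint.add hsumint).congr haerec.symm
  refine ⟨hint2, ?_⟩
  have hMval : ∫ ω, kacM L R I γ n ω ∂μ = ∑ k ∈ Finset.Icc 1 n, ∫ ω, Wp k ω ∂μ := by
    have : kacM L R I γ n = fun ω => ∑ k ∈ Finset.Icc 1 n, Wp k ω := rfl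
    rw [this, MeasureTheory.integral_finset_sum _ (fun k _ => hWpint k)]
  rw [MeasureTheory.integral_congr_ae haerec,
    MeasureTheory.integral_add hMint hsumint,
    MeasureTheory.integral_finset_sum _ (fun k _ => hprod_int k),
    Finset.sum_congr rfl hprod_val, ← Finset.mul_sum, ← hMval]
  have hnne : ((n:ℝ)) ≠ 0 := by
    simp only [hn]
    positivity
  field_simp
  push_cast [hn]
  ring
end Step

theorem max_weight_tendsto_zero_in_probability {Ω : Type*} [MeasurableSpace Ω]
    (μ : Measure Ω) [IsProbabilityMeasure μ]
    (L R : ℕ → Ω → ℝ) (I : ℕ → Ω → ℕ)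
    (hLmeas : ∀ n, Measurable (L n)) (hRmeas : ∀ n, Measurable (R n))
    (hImeas : ∀ n, Measurable (I n))
    (hLpos : ∀ n ω, 0 ≤ L n ω) (hRpos : ∀ n ω, 0 ≤ R n ω)
    (hiid : ∀ n, 1 ≤ n →
      μ.map (fun ω => (L n ω, R n ω)) = μ.map (fun ω => (L 1 ω, R 1 ω)))
    (hunif : ∀ n, 1 ≤ n → ∀ k ∈ Finset.Icc 1 n, μ {ω | I n ω = k} = (n : ENNReal)⁻¹)
    (hindep : iIndepFun (kacFamily L R I) μ)
    (γ : ℝ) (hγ : 0 < γ)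
    (hint : Integrable (fun ω => L 1 ω ^ γ + R 1 ω ^ γ) μ)
    (hSneg : (∫ ω, (L 1 ω ^ γ + R 1 ω ^ γ) ∂μ) < 1) :
    ∀ ε : ℝ, 0 < ε →
      Filter.Tendsto
        (fun n => μ {ω | ∃ j ∈ Finset.Icc 1 n, ε < kacWeight L R I n j ω})
        Filter.atTop (nhds 0) := by
  intro ε hε
  set m : ℝ := ∫ ω, (L 1 ω ^ γ + R 1 ω ^ γ) ∂μ with hm
  have hm0 : 0 ≤ m :=
    MeasureTheory.integral_nonneg fun ω =>
      add_nonneg (Real.rpow_nonneg (hLpos 1 ω) γ) (Real.rpow_nonneg (hRpos 1 ω) γ)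
  set c : ℝ := 1 - m with hcdef
  have hc : 0 < c := by simp only [hcdef]; linarith
  have hc1 : c ≤ 1 := by simp only [hcdef]; linarith
  have hm1c : m - 1 = -c := by simp only [hcdef]; ring
  -- base case
  have hM1 : kacM L R I γ 1 = fun _ => 1 := by
    funext ω
    rw [kacM]
    rw [show Finset.Icc 1 1 = {1} from Finset.Icc_self 1, Finset.sum_singleton]
    rw [kacWeight]
    simp [Real.one_rpow]
  have hbase_int : MeasureTheory.Integrable (kacM L R I γ 1) μ := by
    rw [hM1]; exact MeasureTheory.integrable_const 1
  have hbase_val : ∫ ω, kacM L R I γ 1 ω ∂μ = 1 := by rw [hM1]; simp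
  -- main induction: integrability and exponential bound
  have key : ∀ q : ℕ, MeasureTheory.Integrable (kacM L R I γ (q + 1)) μ ∧
      ∫ ω, kacM L R I γ (q + 1) ω ∂μ
        ≤ Real.exp (-c * ∑ i ∈ Finset.range q, (1 / (i + 1) : ℝ)) := by
    intro q
    induction q with
    | zero =>
      refine ⟨hbase_int, ?_⟩
      rw [hbase_val]
      simp
    | succ q ih =>
      obtain ⟨hint_q, hbnd⟩ := ih
      obtain ⟨hint', hval⟩ := kac_step μ L R I hLmeas hRmeas hImeas hLpos hRpos hiid hunif
        hindep γ hγ hint q hint_q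
      refine ⟨hint', ?_⟩
      rw [hval, ← hm]
      have hAnn : 0 ≤ ∫ ω, kacM L R I γ (q + 1) ω ∂μ :=
        MeasureTheory.integral_nonneg fun ω => Finset.sum_nonneg fun j _ =>
          Real.rpow_nonneg (kacWeight_nonneg L R I hLpos hRpos _ j ω) γ
      have hq1 : (0:ℝ) < (q:ℝ) + 1 := by positivity
      have hdiv : (m - 1) / ((q:ℝ) + 1) = -(c / ((q:ℝ) + 1)) := by
        rw [hm1c, neg_div]
      have h1 : 1 + (m - 1) / ((q:ℝ) + 1) ≤ Real.exp (-(c / ((q:ℝ) + 1))) := by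
        rw [hdiv]
        linarith [Real.add_one_le_exp (-(c / ((q:ℝ) + 1)))]
      have hcq : c / ((q:ℝ) + 1) ≤ 1 := by
        rw [div_le_one hq1]
        linarith
      have h0 : 0 ≤ 1 + (m - 1) / ((q:ℝ) + 1) := by
        rw [hdiv]; linarith
      calc (1 + (m - 1) / ((q:ℝ) + 1)) * ∫ ω, kacM L R I γ (q + 1) ω ∂μ
          ≤ Real.exp (-(c / ((q:ℝ) + 1)))
            * Real.exp (-c * ∑ i ∈ Finset.range q, (1 / (i + 1) : ℝ)) :=
            mul_le_mul h1 hbnd hAnn (Real.exp_pos _).le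
        _ = Real.exp (-c * ∑ i ∈ Finset.range (q + 1), (1 / (i + 1) : ℝ)) := by
            rw [← Real.exp_add, Finset.sum_range_succ]
            congr 1
            push_cast
            ring
  -- Markov bound
  have hεγpos : (0:ℝ) < ε ^ γ := Real.rpow_pos_of_pos hε γ
  have hεγ : ENNReal.ofReal (ε ^ γ) ≠ 0 := ne_of_gt (ENNReal.ofReal_pos.mpr hεγpos)
  have hεγ' : ENNReal.ofReal (ε ^ γ) ≠ ⊤ := ENNReal.ofReal_ne_top
  have hmarkov : ∀ q : ℕ,
      μ {ω | ∃ j ∈ Finset.Icc 1 (q + 1), ε < kacWeight L R I (q + 1) j ω}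
        ≤ (ENNReal.ofReal (ε ^ γ))⁻¹
          * ENNReal.ofReal (Real.exp (-c * ∑ i ∈ Finset.range q, (1 / (i + 1) : ℝ))) := by
    intro q
    have hsub : {ω | ∃ j ∈ Finset.Icc 1 (q + 1), ε < kacWeight L R I (q + 1) j ω}
        ⊆ {ω | ENNReal.ofReal (ε ^ γ) ≤ ENNReal.ofReal (kacM L R I γ (q + 1) ω)} := by
      intro ω hω
      obtain ⟨j, hj, hlt⟩ := hω
      have h1 : ε ^ γ ≤ kacWeight L R I (q + 1) j ω ^ γ :=
        Real.rpow_le_rpow hε.le hlt.le hγ.le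
      have h2 : kacWeight L R I (q + 1) j ω ^ γ ≤ kacM L R I γ (q + 1) ω :=
        Finset.single_le_sum (f := fun i => kacWeight L R I (q + 1) i ω ^ γ)
          (fun i _ => Real.rpow_nonneg
            (kacWeight_nonneg L R I hLpos hRpos (q + 1) i ω) γ) hj
      exact ENNReal.ofReal_le_ofReal (h1.trans h2)
    have hmeasM : Measurable (kacM L R I γ (q + 1)) :=
      kacM_measurable L R I hLmeas hRmeas hImeas γ (q + 1)
    have hml := MeasureTheory.mul_meas_ge_le_lintegral₀ (μ := μ)
      (hmeasM.ennreal_ofReal.aemeasurable) (ENNReal.ofReal (ε ^ γ))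
    have hlint : ∫⁻ ω, ENNReal.ofReal (kacM L R I γ (q + 1) ω) ∂μ
        = ENNReal.ofReal (∫ ω, kacM L R I γ (q + 1) ω ∂μ) :=
      (MeasureTheory.ofReal_integral_eq_lintegral_ofReal (key q).1
        (Filter.Eventually.of_forall fun ω => Finset.sum_nonneg fun j _ =>
          Real.rpow_nonneg (kacWeight_nonneg L R I hLpos hRpos _ j ω) γ)).symm
    calc μ {ω | ∃ j ∈ Finset.Icc 1 (q + 1), ε < kacWeight L R I (q + 1) j ω}
        ≤ μ {ω | ENNReal.ofReal (ε ^ γ) ≤ ENNReal.ofReal (kacM L R I γ (q + 1) ω)} :=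
          MeasureTheory.measure_mono hsub
      _ = (ENNReal.ofReal (ε ^ γ))⁻¹ * (ENNReal.ofReal (ε ^ γ)
            * μ {ω | ENNReal.ofReal (ε ^ γ) ≤ ENNReal.ofReal (kacM L R I γ (q + 1) ω)}) := by
          rw [← mul_assoc, ENNReal.inv_mul_cancel hεγ hεγ', one_mul]
      _ ≤ (ENNReal.ofReal (ε ^ γ))⁻¹
            * ∫⁻ ω, ENNReal.ofReal (kacM L R I γ (q + 1) ω) ∂μ := mul_le_mul_right hml _
      _ = (ENNReal.ofReal (ε ^ γ))⁻¹
            * ENNReal.ofReal (∫ ω, kacM L R I γ (q + 1) ω ∂μ) := by rw [hlint]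
      _ ≤ (ENNReal.ofReal (ε ^ γ))⁻¹
          * ENNReal.ofReal (Real.exp (-c * ∑ i ∈ Finset.range q, (1 / (i + 1) : ℝ))) :=
          mul_le_mul_right (ENNReal.ofReal_le_ofReal (key q).2) _
  -- the bound tends to zero
  have h1 : Filter.Tendsto (fun q : ℕ => c * ∑ i ∈ Finset.range q, (1 / (i + 1) : ℝ))
      Filter.atTop Filter.atTop :=
    (Filter.tendsto_const_mul_atTop_of_pos hc).mpr Real.tendsto_sum_range_one_div_nat_succ_atTop
  have h2 : Filter.Tendsto (fun q : ℕ => -c * ∑ i ∈ Finset.range q, (1 / (i + 1) : ℝ))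
      Filter.atTop Filter.atBot := by
    simpa [neg_mul] using Filter.tendsto_neg_atBot_iff.mpr h1
  have h3 : Filter.Tendsto
      (fun q : ℕ => Real.exp (-c * ∑ i ∈ Finset.range q, (1 / (i + 1) : ℝ)))
      Filter.atTop (nhds 0) := Real.tendsto_exp_atBot.comp h2
  have h4 : Filter.Tendsto
      (fun q : ℕ => ENNReal.ofReal
        (Real.exp (-c * ∑ i ∈ Finset.range q, (1 / (i + 1) : ℝ))))
      Filter.atTop (nhds 0) := by
    simpa using ENNReal.tendsto_ofReal h3
  have h5 : Filter.Tendsto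
      (fun q : ℕ => (ENNReal.ofReal (ε ^ γ))⁻¹ * ENNReal.ofReal
        (Real.exp (-c * ∑ i ∈ Finset.range q, (1 / (i + 1) : ℝ))))
      Filter.atTop (nhds 0) := by
    simpa using ENNReal.Tendsto.const_mul h4 (Or.inr (ENNReal.inv_ne_top.mpr hεγ))
  have h6 : Filter.Tendsto
      (fun q : ℕ => μ {ω | ∃ j ∈ Finset.Icc 1 (q + 1), ε < kacWeight L R I (q + 1) j ω})
      Filter.atTop (nhds 0) :=
    tendsto_of_tendsto_of_tendsto_of_le_of_le tendsto_const_nhds h5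
      (fun q => zero_le) hmarkov
  exact (Filter.tendsto_add_atTop_iff_nat 1).mp h6
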